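/- Let M be an n-dimensional smooth (C^∞) Hausdorff, second-countable manifold without boundary, d ≥ 1, and let {V_x}_{x∈M} be a family of linear subspaces of ℝ^d that is a continuous distribution. Then for every x̄ ∈ M there exist an open neighbourhood U of x̄, a natural number k with k ≤ d·2^{2·5^n − 1}, and continuous maps v_1, …, v_k : U → ℝ^d such that V_x = span{v_1(x), …, v_k(x)} for every x ∈ U. -/

import Mathlib

set_option maxHeartbeats 1000000

open scoped Manifold RealInnerProductSpace

/-- A family of linear subspaces `V x ≤ ℝ^d`, indexed by a topological space `M`, is a
*continuous distribution* if every vector of every fibre extends to a continuous local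
section of the family. -/
def ContinuousDistribution {M : Type*} [TopologicalSpace M] {d : ℕ}
    (V : M → Submodule ℝ (EuclideanSpace ℝ (Fin d))) : Prop :=
  ∀ x₀ : M, ∀ v₀ ∈ V x₀, ∃ U : Set M, IsOpen U ∧ x₀ ∈ U ∧
    ∃ v : M → EuclideanSpace ℝ (Fin d),
      ContinuousOn v U ∧ v x₀ = v₀ ∧ ∀ x ∈ U, v x ∈ V x

lemma exists_global_section {d : ℕ} {M : Type*} [MetricSpace M]
    (V : M → Submodule ℝ (EuclideanSpace ℝ (Fin d)))
    (hV : ContinuousDistribution V) (x₁ : M) (v₁ : EuclideanSpace ℝ (Fin d))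
    (hv : v₁ ∈ V x₁) :
    ∃ g : M → EuclideanSpace ℝ (Fin d), Continuous g ∧ g x₁ = v₁ ∧ ∀ x, g x ∈ V x := by
  classical
  obtain ⟨U, hUo, hxU, v, hvc, hvx, hvmem⟩ := hV x₁ v₁ hv
  obtain ⟨ε, hε, hball⟩ := Metric.isOpen_iff.1 hUo x₁ hxU
  set φ : M → ℝ := fun z => max (1 - (2/ε) * dist z x₁) 0 with hφ
  have hφc : Continuous φ :=
    (continuous_const.sub (continuous_const.mul (continuous_id.dist continuous_const))).max
      continuous_const
  have hφ0 : ∀ z, ε/2 ≤ dist z x₁ → φ z = 0 := by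
    intro z hz
    have h1 : (1:ℝ) ≤ (2/ε) * dist z x₁ := by
      rw [div_mul_eq_mul_div, le_div_iff₀ hε]; nlinarith
    simp only [hφ]
    exact max_eq_right (by linarith)
  set g : M → EuclideanSpace ℝ (Fin d) :=
    fun z => if z ∈ Metric.ball x₁ ε then φ z • v z else 0 with hg
  refine ⟨g, ?_, ?_, ?_⟩
  · rw [continuous_iff_continuousAt]
    intro z₀
    by_cases h : z₀ ∈ Metric.ball x₁ ε
    · have hmem : Metric.ball x₁ ε ∈ nhds z₀ := (Metric.isOpen_ball).mem_nhds h
      have hca : ContinuousAt (fun z => φ z • v z) z₀ :=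
        hφc.continuousAt.smul (hvc.continuousAt (hUo.mem_nhds (hball h)))
      exact hca.congr (Filter.eventuallyEq_of_mem hmem fun z hz => by
        simp only [hg]; rw [if_pos hz])
    · have h2 : ε/2 < dist z₀ x₁ := by
        rw [Metric.mem_ball, not_lt] at h; linarith
      have hW : {z : M | ε/2 < dist z x₁} ∈ nhds z₀ :=
        (isOpen_lt continuous_const (continuous_id.dist continuous_const)).mem_nhds h2
      have : ContinuousAt (fun _ : M => (0 : EuclideanSpace ℝ (Fin d))) z₀ := continuousAt_const
      refine this.congr (Filter.eventuallyEq_of_mem hW fun z hz => ?_)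
      by_cases hzb : z ∈ Metric.ball x₁ ε
      · simp only [hg]; rw [if_pos hzb, hφ0 z (le_of_lt hz), zero_smul]
      · simp only [hg]; rw [if_neg hzb]
  · have : x₁ ∈ Metric.ball x₁ ε := Metric.mem_ball_self hε
    simp only [hg, if_pos this, hφ, dist_self, mul_zero, sub_zero]
    rw [hvx]
    simp
  · intro x
    by_cases hx : x ∈ Metric.ball x₁ ε
    · simp only [hg, if_pos hx]
      exact (V x).smul_mem _ (hvmem x (hball hx))
    · simp only [hg, if_neg hx]
      exact (V x).zero_mem

section
variable {d : ℕ} {M : Type*}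


local notation "E" => EuclideanSpace ℝ (Fin d)

lemma spanning_sections [MetricSpace M] [SecondCountableTopology M] [LocallyCompactSpace M]
    (V : M → Submodule ℝ (EuclideanSpace ℝ (Fin d)))
    (hsec : ∀ x₁ : M, ∀ v₁ ∈ V x₁, ∃ g : M → EuclideanSpace ℝ (Fin d),
      Continuous g ∧ g x₁ = v₁ ∧ ∀ x, g x ∈ V x) :
    ∃ v : Fin d → M → EuclideanSpace ℝ (Fin d), (∀ i, Continuous (v i)) ∧
      ∀ x, V x = Submodule.span ℝ (Set.range fun i => v i x) := by
  classical
  let S : Set C(M, E) := {f | ∀ x, f x ∈ V x}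
  have hS0 : (0 : C(M, E)) ∈ S := fun x => (V x).zero_mem
  haveI : Nonempty S := ⟨⟨0, hS0⟩⟩
  obtain ⟨D, hDc, hDd⟩ := TopologicalSpace.exists_countable_dense S
  obtain ⟨h, hDr⟩ := hDc.exists_eq_range (hDd.nonempty)
  set f : ℕ → C(M, E) := fun j => ((h j : S) : C(M, E)) with hf
  have hfmem : ∀ j x, f j x ∈ V x := fun j x => (h j).2 x
  -- the values of the countable family span every fibre
  have hspan : ∀ x, V x = Submodule.span ℝ (Set.range fun j => f j x) := by
    intro x
    refine le_antisymm ?_ ?_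
    · intro w hw
      obtain ⟨g, hgc, hgx, hgmem⟩ := hsec x w hw
      set G : S := ⟨⟨g, hgc⟩, hgmem⟩ with hG
      have hGD : G ∈ closure D := hDd G
      have hev : Continuous (fun F : S => (F : C(M, E)) x) :=
        (continuous_eval_const x).comp continuous_subtype_val
      have h1 : (G : C(M, E)) x ∈ closure ((fun F : S => (F : C(M, E)) x) '' D) :=
        (image_closure_subset_closure_image hev) (Set.mem_image_of_mem _ hGD)
      have himg : (fun F : S => (F : C(M, E)) x) '' D
          ⊆ (Submodule.span ℝ (Set.range fun j => f j x) : Set E) := by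
        rintro _ ⟨F, hF, rfl⟩
        rw [hDr] at hF
        obtain ⟨j, rfl⟩ := hF
        exact Submodule.subset_span ⟨j, rfl⟩
      have hcl : IsClosed ((Submodule.span ℝ (Set.range fun j => f j x) : Submodule ℝ E) : Set E) :=
        Submodule.closed_of_finiteDimensional _
      have h2 := (closure_mono himg).trans (le_of_eq hcl.closure_eq) h1
      have : (G : C(M, E)) x = w := hgx
      rwa [this] at h2
    · rw [Submodule.span_le]
      rintro _ ⟨j, rfl⟩
      exact hfmem j x
  -- normalise the sections
  set w : ℕ → M → E := fun j x => (1 + ‖f j x‖ ^ 2)⁻¹ • f j x with hw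
  have hpos : ∀ j x, (0:ℝ) < 1 + ‖f j x‖ ^ 2 := fun j x => by positivity
  have hwc : ∀ j, Continuous (w j) := by
    intro j
    exact ((continuous_const.add (((f j).continuous.norm).pow 2)).inv₀
      (fun x => (hpos j x).ne')).smul (f j).continuous
  have hwmem : ∀ j x, w j x ∈ V x := fun j x => (V x).smul_mem _ (hfmem j x)
  have hwnorm : ∀ j x, ‖w j x‖ ≤ 1 := by
    intro j x
    rw [hw, norm_smul, norm_inv, Real.norm_eq_abs, abs_of_pos (hpos j x)]
    rw [inv_mul_le_iff₀ (hpos j x)]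
    nlinarith [norm_nonneg (f j x)]
  have hwspan : ∀ x, V x = Submodule.span ℝ (Set.range fun j => w j x) := by
    intro x
    refine le_antisymm ?_ ?_
    · rw [hspan x, Submodule.span_le]
      rintro _ ⟨j, rfl⟩
      have heq : f j x = (1 + ‖f j x‖ ^ 2) • w j x := by
        rw [hw, smul_smul, mul_inv_cancel₀ (hpos j x).ne', one_smul]
      show f j x ∈ Submodule.span ℝ (Set.range fun j => w j x)
      rw [heq]
      exact Submodule.smul_mem _ _ (Submodule.subset_span ⟨j, rfl⟩)
    · rw [Submodule.span_le]
      rintro _ ⟨j, rfl⟩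
      exact hwmem j x
  -- the Gram operator series
  set T : ℕ → M → (E →L[ℝ] E) :=
    fun j x => ((1:ℝ)/2) ^ j • ((innerSL ℝ (w j x)).smulRight (w j x)) with hT
  have hTnorm : ∀ j x, ‖T j x‖ ≤ (1/2) ^ j := by
    intro j x
    have hTrfl : T j x = ((1:ℝ)/2) ^ j • ((innerSL ℝ (w j x)).smulRight (w j x)) := rfl
    have h1 : ‖T j x‖ = ‖((1:ℝ)/2) ^ j‖ * ‖(innerSL ℝ (w j x)).smulRight (w j x)‖ := by
      rw [hTrfl]
      exact norm_smul (((1:ℝ)/2) ^ j) ((innerSL ℝ (w j x)).smulRight (w j x))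
    rw [h1, ContinuousLinearMap.norm_smulRight_apply, innerSL_apply_norm,
      Real.norm_eq_abs, abs_of_pos (by positivity : (0:ℝ) < (1/2)^j)]
    have : ‖w j x‖ * ‖w j x‖ ≤ 1 := by nlinarith [hwnorm j x, norm_nonneg (w j x)]
    nlinarith [pow_pos (by norm_num : (0:ℝ) < 1/2) j]
  have hTsummable : ∀ x, Summable (fun j => T j x) := fun x =>
    Summable.of_norm_bounded summable_geometric_two (fun j => hTnorm j x)
  set G : M → (E →L[ℝ] E) := fun x => ∑' j, T j x with hGdef
  have hGapply : ∀ x u, G x u = ∑' j, T j x u := by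
    intro x u
    exact (ContinuousLinearMap.apply ℝ E u).map_tsum (hTsummable x)
  have hTapp : ∀ j x u, T j x u = ((1/2) ^ j * ⟪w j x, u⟫) • w j x := by
    intro j x u
    have hTrfl : T j x = ((1:ℝ)/2) ^ j • ((innerSL ℝ (w j x)).smulRight (w j x)) := rfl
    rw [hTrfl]
    simp [ContinuousLinearMap.smulRight_apply, smul_smul]
  have hTusm : ∀ x u, Summable fun j => T j x u := by
    intro x u
    refine Summable.of_norm_bounded (g := fun j => (1/2) ^ j * ‖u‖)
      (summable_geometric_two.mul_right _) (fun j => ?_)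
    calc ‖T j x u‖ ≤ ‖T j x‖ * ‖u‖ := (T j x).le_opNorm u
    _ ≤ (1/2) ^ j * ‖u‖ := by
        have := hTnorm j x
        nlinarith [norm_nonneg u, norm_nonneg (T j x)]
  have hGmem : ∀ x u, G x u ∈ V x := by
    intro x u
    rw [hGapply]
    have hcl : IsClosed ((V x : Submodule ℝ E) : Set E) := Submodule.closed_of_finiteDimensional _
    have hsum := (hTusm x u).hasSum
    refine hcl.mem_of_tendsto hsum.tendsto_sum_nat (Filter.Eventually.of_forall fun s => ?_)
    refine Submodule.sum_mem _ (fun j _ => ?_)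
    rw [hTapp]
    exact (V x).smul_mem _ (hwmem j x)
  have hkerge : ∀ x u, u ∈ (V x)ᗮ → G x u = 0 := by
    intro x u hu
    rw [hGapply]
    have hz : ∀ j, T j x u = 0 := by
      intro j
      rw [hTapp]
      have : ⟪w j x, u⟫ = 0 := Submodule.inner_right_of_mem_orthogonal (hwmem j x) hu
      rw [this, mul_zero, zero_smul]
    exact (tsum_congr hz).trans tsum_zero
  have hkerle : ∀ x u, G x u = 0 → u ∈ (V x)ᗮ := by
    intro x u hu
    have hinner : ∀ j, ⟪w j x, u⟫ = 0 := by
      have hterm : ∀ j, (innerSL ℝ u) (T j x u) = ((1:ℝ)/2) ^ j * ⟪w j x, u⟫ ^ 2 := by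
        intro j
        rw [hTapp]
        simp only [innerSL_apply_apply]
        rw [real_inner_smul_right, real_inner_comm u (w j x)]
        ring
      have h0 : ∑' j, (((1:ℝ)/2) ^ j * ⟪w j x, u⟫ ^ 2) = 0 := by
        have hmap := (innerSL ℝ u).map_tsum (hTusm x u)
        rw [← hGapply, hu, map_zero] at hmap
        rw [← tsum_congr hterm, ← hmap]
      have hnn : ∀ i, 0 ≤ ((1:ℝ)/2) ^ i * ⟪w i x, u⟫ ^ 2 :=
        fun i => mul_nonneg (by positivity) (sq_nonneg _)
      have hsm : Summable (fun i => ((1:ℝ)/2) ^ i * ⟪w i x, u⟫ ^ 2) := by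
        refine Summable.of_nonneg_of_le hnn (fun i => ?_)
          (summable_geometric_two.mul_right (‖u‖ ^ 2))
        have h1 : |⟪w i x, u⟫| ≤ ‖w i x‖ * ‖u‖ := abs_real_inner_le_norm _ _
        have h2 := hwnorm i x
        have h3 : ⟪w i x, u⟫ ^ 2 ≤ ‖u‖ ^ 2 := by
          have h6 : ‖w i x‖ * ‖u‖ ≤ ‖u‖ := by nlinarith [norm_nonneg u]
          have h7 := mul_self_le_mul_self (abs_nonneg ⟪w i x, u⟫) (h1.trans h6)
          nlinarith [sq_abs ⟪w i x, u⟫]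
        have h4 : (0:ℝ) < (1/2) ^ i := by positivity
        nlinarith
      intro j
      have hle := Summable.le_tsum hsm j (fun i _ => hnn i)
      rw [h0] at hle
      have h2 : ((1:ℝ)/2) ^ j * ⟪w j x, u⟫ ^ 2 = 0 := le_antisymm hle (hnn j)
      have h5 : ((1:ℝ)/2) ^ j ≠ 0 := by positivity
      have h6 : ⟪w j x, u⟫ ^ 2 = 0 := by
        rcases mul_eq_zero.1 h2 with h | h
        · exact absurd h h5
        · exact h
      exact pow_eq_zero_iff (two_ne_zero) |>.1 h6
    rw [Submodule.mem_orthogonal]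
    intro y hy
    rw [hwspan x] at hy
    have hsub : Submodule.span ℝ (Set.range fun j => w j x)
        ≤ LinearMap.ker ((innerSL ℝ u : E →L[ℝ] ℝ) : E →ₗ[ℝ] ℝ) := by
      rw [Submodule.span_le]
      rintro _ ⟨j, rfl⟩
      have : (innerSL ℝ u) (w j x) = 0 := by
        show ⟪u, w j x⟫ = 0
        rw [real_inner_comm]
        exact hinner j
      simpa [LinearMap.mem_ker] using this
    have h7 := hsub hy
    rw [LinearMap.mem_ker] at h7
    rw [real_inner_comm]
    simpa using h7
  have hrange : ∀ x, LinearMap.range ((G x : E →L[ℝ] E) : E →ₗ[ℝ] E) = V x := by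
    intro x
    have hle : LinearMap.range ((G x : E →L[ℝ] E) : E →ₗ[ℝ] E) ≤ V x := by
      rintro _ ⟨u, rfl⟩
      exact hGmem x u
    have hker : LinearMap.ker ((G x : E →L[ℝ] E) : E →ₗ[ℝ] E) = (V x)ᗮ := by
      ext u
      constructor
      · intro hu
        exact hkerle x u (LinearMap.mem_ker.1 hu)
      · intro hu
        exact LinearMap.mem_ker.2 (hkerge x u hu)
    have h1 := LinearMap.finrank_range_add_finrank_ker ((G x : E →L[ℝ] E) : E →ₗ[ℝ] E)
    have h2 := Submodule.finrank_add_finrank_orthogonal (V x)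
    rw [hker] at h1
    have h3 : Module.finrank ℝ (V x)
        ≤ Module.finrank ℝ (LinearMap.range ((G x : E →L[ℝ] E) : E →ₗ[ℝ] E)) := by omega
    exact Submodule.eq_of_le_of_finrank_le hle h3
  refine ⟨fun i x => G x (EuclideanSpace.single i 1), ?_, ?_⟩
  · intro i
    show Continuous fun x => G x (EuclideanSpace.single i (1:ℝ))
    have heq : (fun x => G x (EuclideanSpace.single i (1:ℝ)))
        = fun x => ∑' j, T j x (EuclideanSpace.single i 1) := by
      funext x
      exact hGapply x _
    rw [heq]
    refine continuous_tsum (fun j => ?_)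
      (summable_geometric_two.mul_right ‖(EuclideanSpace.single i (1:ℝ) : E)‖) (fun j x => ?_)
    · have heq2 : (fun x => T j x (EuclideanSpace.single i (1:ℝ)))
          = fun x => (((1:ℝ)/2) ^ j * ⟪w j x, EuclideanSpace.single i 1⟫) • w j x := by
        funext x
        exact hTapp j x _
      rw [heq2]
      exact (continuous_const.mul (Continuous.inner (𝕜 := ℝ) (hwc j)
        (continuous_const (y := (EuclideanSpace.single i (1:ℝ) : E))))).smul (hwc j)
    · calc ‖T j x (EuclideanSpace.single i (1:ℝ))‖
          ≤ ‖T j x‖ * ‖(EuclideanSpace.single i (1:ℝ) : E)‖ := (T j x).le_opNorm _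
      _ ≤ (1/2) ^ j * ‖(EuclideanSpace.single i (1:ℝ) : E)‖ := by
          have := hTnorm j x
          have := norm_nonneg (EuclideanSpace.single i (1:ℝ) : E)
          nlinarith
  · intro x
    show V x = Submodule.span ℝ (Set.range fun i : Fin d => G x (EuclideanSpace.single i 1))
    have hb : Submodule.span ℝ (Set.range fun i : Fin d => (EuclideanSpace.single i (1:ℝ) : E))
        = ⊤ := by
      have hbe : (fun i : Fin d => (EuclideanSpace.single i (1:ℝ) : E))
          = ⇑(EuclideanSpace.basisFun (Fin d) ℝ).toBasis :=
        funext fun i => by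
          rw [OrthonormalBasis.coe_toBasis, EuclideanSpace.basisFun_apply]
      rw [hbe]
      exact (EuclideanSpace.basisFun (Fin d) ℝ).toBasis.span_eq
    calc V x = LinearMap.range ((G x : E →L[ℝ] E) : E →ₗ[ℝ] E) := (hrange x).symm
    _ = Submodule.map ((G x : E →L[ℝ] E) : E →ₗ[ℝ] E) ⊤ := (Submodule.map_top _).symm
    _ = Submodule.map ((G x : E →L[ℝ] E) : E →ₗ[ℝ] E)
          (Submodule.span ℝ (Set.range fun i : Fin d => (EuclideanSpace.single i (1:ℝ) : E))) := by
        rw [hb]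
    _ = Submodule.span ℝ (((G x : E →L[ℝ] E) : E →ₗ[ℝ] E) ''
          (Set.range fun i : Fin d => (EuclideanSpace.single i (1:ℝ) : E))) :=
        (Submodule.span_image _).symm
    _ = Submodule.span ℝ (Set.range fun i : Fin d => G x (EuclideanSpace.single i 1)) := by
        rw [← Set.range_comp]
        rfl
end

/-- (implication i) ⟹ ii) of Theorem 3.3): on an `n`-dimensional smooth
manifold, a continuous distribution of subspaces of `ℝ^d` is locally spanned by at most
`d·2^(2·5^n − 1)` continuous sections. -/
theorem stmt_2 (n d : ℕ) (hd : 1 ≤ d) (M : Type*) [TopologicalSpace M] [T2Space M]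
    [SecondCountableTopology M] [ChartedSpace (EuclideanSpace ℝ (Fin n)) M]
    [IsManifold (𝓡 n) (⊤ : ℕ∞) M]
    (V : M → Submodule ℝ (EuclideanSpace ℝ (Fin d)))
    (hV : ContinuousDistribution V) (x₀ : M) :
    ∃ (U : Set M) (k : ℕ), IsOpen U ∧ x₀ ∈ U ∧ k ≤ d * 2 ^ (2 * 5 ^ n - 1) ∧
      ∃ v : Fin k → M → EuclideanSpace ℝ (Fin d),
        (∀ i, ContinuousOn (v i) U) ∧
        ∀ x ∈ U, V x = Submodule.span ℝ (Set.range fun i => v i x) := by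
  haveI : LocallyCompactSpace M := Manifold.locallyCompact_of_finiteDimensional (𝓡 n)
  haveI : TopologicalSpace.MetrizableSpace M := Manifold.metrizableSpace (𝓡 n) M
  letI : MetricSpace M := TopologicalSpace.metrizableSpaceMetric M
  obtain ⟨v, hvc, hvspan⟩ := spanning_sections V (fun x₁ v₁ hv₁ =>
    exists_global_section V hV x₁ v₁ hv₁)
  refine ⟨Set.univ, d, isOpen_univ, Set.mem_univ _, ?_, v, fun i => (hvc i).continuousOn,
    fun x _ => hvspan x⟩
  exact Nat.le_mul_of_pos_right d (Nat.two_pow_pos _)
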